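/- dist_AW is a pseudometric on block lower triangular matrices in ℝ^{Nd×Nd}: it is nonnegative, symmetric, vanishes on the diagonal, and satisfies the triangle inequality dist_AW(L, P) ≤ dist_AW(L, M) + dist_AW(M, P). -/

import Mathlib

open Matrix BigOperators Classical

/-- Squared Frobenius norm. -/
def frobSq {m n : Type*} [Fintype m] [Fintype n] (C : Matrix m n ℝ) : ℝ :=
  ∑ i, ∑ j, (C i j) ^ 2

/-- Frobenius norm. -/
noncomputable def frobNorm {m n : Type*} [Fintype m] [Fintype n]
    (C : Matrix m n ℝ) : ℝ :=
  Real.sqrt (frobSq C)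

/-- Square root of a positive semidefinite matrix (junk value `0` otherwise). -/
noncomputable def psdSqrt {n : Type*} [Fintype n] [DecidableEq n]
    (A : Matrix n n ℝ) : Matrix n n ℝ :=
  if h : A.PosSemidef then
    (h.1.eigenvectorUnitary : Matrix n n ℝ) *
      diagonal ((RCLike.ofReal : ℝ → ℝ) ∘ Real.sqrt ∘ h.1.eigenvalues) *
      (star h.1.eigenvectorUnitary : Matrix n n ℝ)
  else 0

/-- Nuclear norm: `‖C‖₊ = tr((CᵀC)^{1/2})`, the sum of the singular values. -/
noncomputable def nuclearNorm {m n : Type*} [Fintype m] [Fintype n] [DecidableEq n]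
    (C : Matrix m n ℝ) : ℝ :=
  (psdSqrt (Cᵀ * C)).trace

/-- Squared Bures–Wasserstein distance:
`dist_BW²(A,B) = tr A + tr B − 2 tr((A^{1/2} B A^{1/2})^{1/2})`. -/
noncomputable def distBWsq {n : Type*} [Fintype n] [DecidableEq n]
    (A B : Matrix n n ℝ) : ℝ :=
  A.trace + B.trace - 2 * (psdSqrt (psdSqrt A * B * psdSqrt A)).trace

variable {N d : ℕ}

/-- `L` is block lower triangular: all `d×d` blocks `L_{s,t}` with `s < t` vanish. -/
def BlockLowerTri (L : Matrix (Fin N × Fin d) (Fin N × Fin d) ℝ) : Prop :=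
  ∀ s t : Fin N, s < t → ∀ i j : Fin d, L (s, i) (t, j) = 0

/-- The `t`-th `d×d` diagonal block of a matrix. -/
def diagBlock (A : Matrix (Fin N × Fin d) (Fin N × Fin d) ℝ) (t : Fin N) :
    Matrix (Fin d) (Fin d) ℝ :=
  fun i j => A (t, i) (t, j)

/-- The `t`-th column block `L_{·,t} ∈ ℝ^{Nd×d}` of `L`. -/
def colBlock (L : Matrix (Fin N × Fin d) (Fin N × Fin d) ℝ) (t : Fin N) :
    Matrix (Fin N × Fin d) (Fin d) ℝ :=
  fun p j => L p (t, j)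

/-- Block diagonal matrix built from `d×d` blocks `Q₁, …, Q_N`. -/
def blockDiag (Q : Fin N → Matrix (Fin d) (Fin d) ℝ) :
    Matrix (Fin N × Fin d) (Fin N × Fin d) ℝ :=
  fun p q => if p.1 = q.1 then Q q.1 p.2 q.2 else 0

/-- Squared adapted Wasserstein pseudo-distance between Cholesky factors:
`dist_AW²(L,M) = ‖L‖_F² + ‖M‖_F² − 2 ∑_t ‖(LᵀM)_{t,t}‖₊`. -/
noncomputable def distAWsq (L M : Matrix (Fin N × Fin d) (Fin N × Fin d) ℝ) : ℝ :=
  frobSq L + frobSq M - 2 * ∑ t : Fin N, nuclearNorm (diagBlock (Lᵀ * M) t)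

/-- Adapted Wasserstein pseudo-distance. -/
noncomputable def distAW (L M : Matrix (Fin N × Fin d) (Fin N × Fin d) ℝ) : ℝ :=
  Real.sqrt (distAWsq L M)

set_option linter.unusedSectionVars false
set_option linter.unusedVariables false

section Core
variable {n : Type*} [Fintype n] [DecidableEq n]

-- dot product Cauchy-Schwarz
lemma dot_le_sqrt (x y : n → ℝ) :
    x ⬝ᵥ y ≤ Real.sqrt (x ⬝ᵥ x) * Real.sqrt (y ⬝ᵥ y) := by
  have h := Finset.sum_mul_sq_le_sq_mul_sq Finset.univ x y
  have h1 : x ⬝ᵥ y ≤ |x ⬝ᵥ y| := le_abs_self _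
  have h2 : |x ⬝ᵥ y| = Real.sqrt ((x ⬝ᵥ y) ^ 2) := (Real.sqrt_sq_eq_abs _).symm
  have h3 : Real.sqrt ((x ⬝ᵥ y) ^ 2) ≤ Real.sqrt ((∑ i, x i ^ 2) * ∑ i, y i ^ 2) := by
    apply Real.sqrt_le_sqrt
    simpa [dotProduct] using h
  calc x ⬝ᵥ y ≤ Real.sqrt ((x ⬝ᵥ y) ^ 2) := h2 ▸ h1
    _ ≤ Real.sqrt ((∑ i, x i ^ 2) * ∑ i, y i ^ 2) := h3
    _ = Real.sqrt (x ⬝ᵥ x) * Real.sqrt (y ⬝ᵥ y) := by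
        rw [Real.sqrt_mul (by positivity)]
        simp [dotProduct, pow_two]

lemma orthonormal_dot {u : n → EuclideanSpace ℝ n} (hu : Orthonormal ℝ u) (j k : n) :
    (⇑(u j) : n → ℝ) ⬝ᵥ ⇑(u k) = if j = k then 1 else 0 := by
  have := orthonormal_iff_ite.mp hu j k
  rw [dotProduct_comm]
  simpa [PiLp.inner_apply, RCLike.inner_apply, dotProduct] using this

set_option linter.unusedSectionVars false

/-- Matrix whose columns are the family `u`. -/
def colMat (u : n → n → ℝ) : Matrix n n ℝ := fun i j => u j i

lemma colMat_orth {u : n → n → ℝ}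
    (hdot : ∀ j k, u j ⬝ᵥ u k = if j = k then 1 else 0) :
    (colMat u)ᵀ * colMat u = 1 := by
  ext j k
  simpa [Matrix.mul_apply, colMat, Matrix.one_apply, dotProduct] using hdot j k

lemma trace_conj {U X : Matrix n n ℝ} (hU : Uᵀ * U = 1) :
    (Uᵀ * X * U).trace = X.trace := by
  have h2 : U * Uᵀ = 1 := mul_eq_one_comm.mp hU
  rw [Matrix.trace_mul_cycle, h2, Matrix.one_mul]

lemma trace_eq_sum_dot (X : Matrix n n ℝ) {u : n → n → ℝ}
    (hdot : ∀ j k, u j ⬝ᵥ u k = if j = k then 1 else 0) :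
    X.trace = ∑ j, u j ⬝ᵥ (X *ᵥ u j) := by
  have h := trace_conj (X := X) (colMat_orth hdot)
  rw [← h, Matrix.trace]
  apply Finset.sum_congr rfl
  intro j _
  simp only [Matrix.diag_apply, Matrix.mul_apply, Matrix.transpose_apply, colMat,
    dotProduct, Matrix.mulVec, dotProduct, Finset.sum_mul, Finset.mul_sum]
  rw [Finset.sum_comm]
  exact Finset.sum_congr rfl fun i _ => Finset.sum_congr rfl fun k _ => by ring

lemma psd_tmul (C : Matrix n n ℝ) : (Cᵀ * C).PosSemidef := by
  have := Matrix.posSemidef_conjTranspose_mul_self C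
  rwa [Matrix.conjTranspose_eq_transpose_of_trivial] at this

lemma nuclearNorm_eq_sum_sqrt (C : Matrix n n ℝ) :
    nuclearNorm C = ∑ i, Real.sqrt ((psd_tmul C).1.eigenvalues i) := by
  rw [nuclearNorm, psdSqrt, dif_pos (psd_tmul C),
    Matrix.trace_mul_cycle, Unitary.coe_star_mul_self,
    Matrix.one_mul, Matrix.trace_diagonal]
  simp [Function.comp]

lemma dot_mulVec_self (C : Matrix n n ℝ) (x y : n → ℝ) :
    (C *ᵥ x) ⬝ᵥ (C *ᵥ y) = x ⬝ᵥ ((Cᵀ * C) *ᵥ y) := by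
  rw [← Matrix.mulVec_mulVec, Matrix.dotProduct_mulVec x, Matrix.vecMul_transpose]

lemma dot_eigen (C : Matrix n n ℝ) (j k : n) :
    (C *ᵥ ⇑((psd_tmul C).1.eigenvectorBasis j)) ⬝ᵥ (C *ᵥ ⇑((psd_tmul C).1.eigenvectorBasis k))
      = if j = k then (psd_tmul C).1.eigenvalues k else 0 := by
  rw [dot_mulVec_self, (psd_tmul C).1.mulVec_eigenvectorBasis k]
  have h := orthonormal_dot ((psd_tmul C).1.eigenvectorBasis).orthonormal j k
  simp only [dotProduct_smul, smul_eq_mul, h]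
  split_ifs <;> ring

lemma trace_mul_orth_le_nuclear (C Q : Matrix n n ℝ) (hQ : Qᵀ * Q = 1) :
    (C * Q).trace ≤ nuclearNorm C := by
  have hA := psd_tmul C
  set u := hA.1.eigenvectorBasis with hu
  have hdotu := orthonormal_dot u.orthonormal
  rw [Matrix.trace_mul_comm,
    trace_eq_sum_dot (Q * C) (fun j k => hdotu j k), nuclearNorm_eq_sum_sqrt]
  apply Finset.sum_le_sum
  intro j _
  have h1 : ⇑(u j) ⬝ᵥ ((Q * C) *ᵥ ⇑(u j)) = (Qᵀ *ᵥ ⇑(u j)) ⬝ᵥ (C *ᵥ ⇑(u j)) := by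
    rw [← Matrix.mulVec_mulVec, Matrix.dotProduct_mulVec, ← Matrix.mulVec_transpose]
  have h2 : (Qᵀ *ᵥ ⇑(u j)) ⬝ᵥ (Qᵀ *ᵥ ⇑(u j)) = 1 := by
    rw [dot_mulVec_self, Matrix.transpose_transpose, mul_eq_one_comm.mp hQ,
      Matrix.one_mulVec, hdotu]
    simp
  have h3 : (C *ᵥ ⇑(u j)) ⬝ᵥ (C *ᵥ ⇑(u j)) = hA.1.eigenvalues j := by
    simpa using dot_eigen C j j
  calc ⇑(u j) ⬝ᵥ ((Q * C) *ᵥ ⇑(u j))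
      ≤ Real.sqrt ((Qᵀ *ᵥ ⇑(u j)) ⬝ᵥ (Qᵀ *ᵥ ⇑(u j))) *
        Real.sqrt ((C *ᵥ ⇑(u j)) ⬝ᵥ (C *ᵥ ⇑(u j))) := h1 ▸ dot_le_sqrt _ _
    _ = Real.sqrt (hA.1.eigenvalues j) := by rw [h2, h3]; simp


lemma inner_symm_eq_dot (w1 w2 : n → ℝ) :
    (inner ℝ ((WithLp.equiv 2 (n → ℝ)).symm w1) ((WithLp.equiv 2 (n → ℝ)).symm w2) : ℝ)
      = w1 ⬝ᵥ w2 := by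
  simp [PiLp.inner_apply, RCLike.inner_apply, WithLp.equiv_symm_apply, PiLp.toLp_apply, dotProduct, mul_comm]

lemma exists_trace_mul_eq_nuclear (C : Matrix n n ℝ) :
    ∃ Q : Matrix n n ℝ, Qᵀ * Q = 1 ∧ (C * Q).trace = nuclearNorm C := by
  obtain ⟨lam, u, hlam0, hdotu, hde, hnn⟩ :
      ∃ (lam : n → ℝ) (u : n → n → ℝ),
        (∀ j, 0 ≤ lam j) ∧
        (∀ j k, u j ⬝ᵥ u k = if j = k then 1 else 0) ∧
        (∀ j k, (C *ᵥ u j) ⬝ᵥ (C *ᵥ u k) = if j = k then lam k else 0) ∧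
        nuclearNorm C = ∑ j, Real.sqrt (lam j) :=
    ⟨(psd_tmul C).1.eigenvalues, fun j => ⇑((psd_tmul C).1.eigenvectorBasis j),
      (psd_tmul C).eigenvalues_nonneg,
      orthonormal_dot ((psd_tmul C).1.eigenvectorBasis).orthonormal,
      dot_eigen C, nuclearNorm_eq_sum_sqrt C⟩
  set v : n → EuclideanSpace ℝ n :=
    fun j => (Real.sqrt (lam j))⁻¹ • ((WithLp.equiv 2 (n → ℝ)).symm (C *ᵥ u j)) with hv
  set s : Set n := {j | lam j ≠ 0} with hs
  have hvon : Orthonormal ℝ (s.restrict v) := by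
    rw [orthonormal_iff_ite]
    rintro ⟨j, hj⟩ ⟨k, hk⟩
    replace hj : lam j ≠ 0 := hj
    replace hk : lam k ≠ 0 := hk
    have hinner : (inner ℝ (v j) (v k) : ℝ) =
        (Real.sqrt (lam j))⁻¹ * ((Real.sqrt (lam k))⁻¹ * ((C *ᵥ u j) ⬝ᵥ (C *ᵥ u k))) := by
      simp only [hv]
      rw [real_inner_smul_left, real_inner_smul_right, inner_symm_eq_dot]
    have hjk := hde j k
    by_cases h : j = k
    · subst h
      have hpos : 0 < lam j := lt_of_le_of_ne (hlam0 j) (Ne.symm hj)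
      have hsq : Real.sqrt (lam j) * Real.sqrt (lam j) = lam j :=
        Real.mul_self_sqrt (hlam0 j)
      have hval : (inner ℝ (v j) (v j) : ℝ) = 1 := by
        rw [hinner]
        simp only [if_pos rfl, ↓reduceIte] at hjk
        rw [hjk, ← hsq]
        have h0 : Real.sqrt (lam j) ≠ 0 := by
          intro h'
          rw [h', mul_zero] at hsq
          exact hj hsq.symm
        field_simp
        rw [Real.sqrt_sq (Real.sqrt_nonneg _)]
      rw [if_pos rfl]; exact hval
    · have hval : (inner ℝ (v j) (v k) : ℝ) = 0 := by
        rw [hinner]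
        simp only [if_neg h] at hjk
        rw [hjk]; ring
      have hne : (⟨j, hj⟩ : s) ≠ ⟨k, hk⟩ := by simpa [Subtype.mk.injEq] using h
      rw [if_neg hne]; exact hval
  obtain ⟨b, hb⟩ := hvon.exists_orthonormalBasis_extension_of_card_eq
    (finrank_euclideanSpace (𝕜 := ℝ) (ι := n))
  have hdotb := orthonormal_dot b.orthonormal
  have hkey : ∀ j, C *ᵥ u j = Real.sqrt (lam j) • ⇑(b j) := by
    intro j
    by_cases hj : lam j = 0
    · have h0 : (C *ᵥ u j) ⬝ᵥ (C *ᵥ u j) = 0 := by simpa [hj] using hde j j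
      rw [dotProduct_self_eq_zero] at h0
      rw [h0, hj]
      simp
    · have hbj : b j = v j := hb j hj
      rw [hbj]
      funext i
      have hpos : 0 < Real.sqrt (lam j) :=
        Real.sqrt_pos.mpr (lt_of_le_of_ne (hlam0 j) (Ne.symm hj))
      show (C *ᵥ u j) i = Real.sqrt (lam j) * ((Real.sqrt (lam j))⁻¹ * (C *ᵥ u j) i)
      field_simp
  set U : Matrix n n ℝ := colMat u with hU
  set B : Matrix n n ℝ := colMat (fun j => ⇑(b j)) with hB
  have hUo : Uᵀ * U = 1 := colMat_orth hdotu
  have hBo : Bᵀ * B = 1 := colMat_orth hdotb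
  refine ⟨U * Bᵀ, ?_, ?_⟩
  · rw [Matrix.transpose_mul, Matrix.transpose_transpose, Matrix.mul_assoc,
      ← Matrix.mul_assoc Uᵀ, hUo, Matrix.one_mul, mul_eq_one_comm.mp hBo]
  · have hQt : ∀ j, (U * Bᵀ)ᵀ *ᵥ u j = ⇑(b j) := by
      intro j
      rw [Matrix.transpose_mul, Matrix.transpose_transpose, ← Matrix.mulVec_mulVec]
      have h1 : Uᵀ *ᵥ u j = Pi.single j 1 := by
        funext k
        simpa [Matrix.mulVec, Matrix.transpose_apply, hU, colMat, dotProduct,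
          Pi.single_apply] using hdotu k j
      rw [h1]
      funext i
      simp [hB, colMat, Matrix.mulVec_single]
    rw [Matrix.trace_mul_comm, trace_eq_sum_dot (U * Bᵀ * C) hdotu, hnn]
    apply Finset.sum_congr rfl
    intro j _
    have h1 : u j ⬝ᵥ ((U * Bᵀ * C) *ᵥ u j) = ((U * Bᵀ)ᵀ *ᵥ u j) ⬝ᵥ (C *ᵥ u j) := by
      rw [← Matrix.mulVec_mulVec, Matrix.dotProduct_mulVec, ← Matrix.mulVec_transpose]
    rw [h1, hQt j, hkey j]
    simp only [dotProduct_smul, smul_eq_mul]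
    rw [hdotb]
    simp

lemma nuclearNorm_transpose_le (C : Matrix n n ℝ) : nuclearNorm Cᵀ ≤ nuclearNorm C := by
  obtain ⟨Q, hQ, htr⟩ := exists_trace_mul_eq_nuclear Cᵀ
  rw [← htr]
  have h1 : (Cᵀ * Q).trace = (C * Qᵀ).trace := by
    rw [← Matrix.trace_transpose (Cᵀ * Q), Matrix.transpose_mul,
      Matrix.transpose_transpose, Matrix.trace_mul_comm]
  rw [h1]
  exact trace_mul_orth_le_nuclear C Qᵀ
    (by rw [Matrix.transpose_transpose]; exact mul_eq_one_comm.mp hQ)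

lemma nuclearNorm_transpose (C : Matrix n n ℝ) : nuclearNorm Cᵀ = nuclearNorm C :=
  le_antisymm (nuclearNorm_transpose_le C)
    (by simpa using nuclearNorm_transpose_le Cᵀ)

end Core

section Frob
variable {m p : Type*} [Fintype m] [Fintype p]

lemma frobSq_eq_trace (C : Matrix m p ℝ) : frobSq C = (Cᵀ * C).trace := by
  rw [frobSq, Matrix.trace, Finset.sum_comm]
  apply Finset.sum_congr rfl
  intro j _
  simp [Matrix.mul_apply, Matrix.diag_apply, pow_two]

lemma frobNorm_eq_norm (C : Matrix m p ℝ) :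
    frobNorm C = ‖(WithLp.equiv 2 ((m × p) → ℝ)).symm (fun q => C q.1 q.2)‖ := by
  rw [frobNorm, EuclideanSpace.norm_eq]
  congr 1
  rw [frobSq, Fintype.sum_prod_type]
  apply Finset.sum_congr rfl
  intro i _
  apply Finset.sum_congr rfl
  intro j _
  simp [WithLp.equiv_symm_apply, PiLp.toLp_apply, Real.norm_eq_abs, sq_abs]

lemma frobNorm_triangle (A B : Matrix m p ℝ) :
    frobNorm (A + B) ≤ frobNorm A + frobNorm B := by
  rw [frobNorm_eq_norm, frobNorm_eq_norm, frobNorm_eq_norm]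
  have h : ((WithLp.equiv 2 ((m × p) → ℝ)).symm (fun q => (A + B) q.1 q.2))
      = (WithLp.equiv 2 ((m × p) → ℝ)).symm (fun q => A q.1 q.2)
        + (WithLp.equiv 2 ((m × p) → ℝ)).symm (fun q => B q.1 q.2) := by
    rw [WithLp.equiv_symm_apply, ← WithLp.toLp_add]
    rfl
  rw [h]
  exact norm_add_le _ _

end Frob

section Blocks
variable {N d : ℕ}

lemma blockDiag_transpose' (Q : Fin N → Matrix (Fin d) (Fin d) ℝ) :
    (_root_.blockDiag Q)ᵀ = _root_.blockDiag (fun t => (Q t)ᵀ) := by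
  ext ⟨a, i⟩ ⟨b, j⟩
  simp only [Matrix.transpose_apply, _root_.blockDiag]
  by_cases h : a = b
  · subst h; simp
  · simp [h, Ne.symm h]

lemma blockDiag_mul' (R Q : Fin N → Matrix (Fin d) (Fin d) ℝ) :
    _root_.blockDiag R * _root_.blockDiag Q = _root_.blockDiag (fun t => R t * Q t) := by
  ext ⟨a, i⟩ ⟨b, j⟩
  simp only [Matrix.mul_apply, _root_.blockDiag, Fintype.sum_prod_type,
    ite_mul, zero_mul, mul_ite, mul_zero]
  by_cases h : a = b
  · subst h
    simp [Matrix.mul_apply]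
  · simp [h]

lemma blockDiag_one' : _root_.blockDiag (fun _ : Fin N => (1 : Matrix (Fin d) (Fin d) ℝ)) = 1 := by
  ext ⟨a, i⟩ ⟨b, j⟩
  by_cases h : a = b
  · subst h; simp [_root_.blockDiag, Matrix.one_apply, Prod.ext_iff]
  · simp [_root_.blockDiag, h, Matrix.one_apply, Prod.ext_iff]

lemma blockDiag_orth' {Q : Fin N → Matrix (Fin d) (Fin d) ℝ}
    (h : ∀ t, (Q t)ᵀ * Q t = 1) : (_root_.blockDiag Q)ᵀ * _root_.blockDiag Q = 1 := by
  rw [blockDiag_transpose', blockDiag_mul']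
  have heq : (fun t => (Q t)ᵀ * Q t) = fun _ : Fin N => (1 : Matrix (Fin d) (Fin d) ℝ) :=
    funext h
  rw [heq, blockDiag_one']

lemma trace_mul_blockDiag (A : Matrix (Fin N × Fin d) (Fin N × Fin d) ℝ)
    (Q : Fin N → Matrix (Fin d) (Fin d) ℝ) :
    (A * _root_.blockDiag Q).trace = ∑ t, (diagBlock A t * Q t).trace := by
  simp only [Matrix.trace, Matrix.diag_apply, Matrix.mul_apply, _root_.blockDiag,
    diagBlock, Fintype.sum_prod_type, mul_ite, mul_zero]
  apply Finset.sum_congr rfl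
  intro t _
  rw [Finset.sum_comm, Finset.sum_eq_single t (fun y _ hy => by simp [hy]) (by simp)]
  simp

lemma sum_trace_diagBlock (A : Matrix (Fin N × Fin d) (Fin N × Fin d) ℝ) :
    ∑ t, (diagBlock A t).trace = A.trace := by
  simp only [Matrix.trace, Matrix.diag_apply, diagBlock, Fintype.sum_prod_type]

lemma frobSq_mul_orth (X : Matrix (Fin N × Fin d) (Fin N × Fin d) ℝ)
    {B : Matrix (Fin N × Fin d) (Fin N × Fin d) ℝ} (hB : Bᵀ * B = 1) :
    frobSq (X * B) = frobSq X := by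
  rw [frobSq_eq_trace, frobSq_eq_trace, Matrix.transpose_mul, Matrix.trace_mul_comm,
    Matrix.mul_assoc X B, ← Matrix.mul_assoc B Bᵀ, mul_eq_one_comm.mp hB,
    Matrix.one_mul, Matrix.trace_mul_comm]

lemma frobSq_sub_mul (L M : Matrix (Fin N × Fin d) (Fin N × Fin d) ℝ)
    {Q : Fin N → Matrix (Fin d) (Fin d) ℝ} (hQ : ∀ t, (Q t)ᵀ * Q t = 1) :
    frobSq (L - M * _root_.blockDiag Q) = frobSq L + frobSq M
      - 2 * ∑ t, (diagBlock (Lᵀ * M) t * Q t).trace := by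
  have hbd : (_root_.blockDiag Q)ᵀ * _root_.blockDiag Q = 1 := blockDiag_orth' hQ
  have hX : frobSq (M * _root_.blockDiag Q) = frobSq M := frobSq_mul_orth M hbd
  rw [frobSq_eq_trace]
  have hexp : (L - M * _root_.blockDiag Q)ᵀ * (L - M * _root_.blockDiag Q)
      = Lᵀ * L - Lᵀ * (M * _root_.blockDiag Q) - (M * _root_.blockDiag Q)ᵀ * L + (M * _root_.blockDiag Q)ᵀ * (M * _root_.blockDiag Q) := by
    rw [Matrix.transpose_sub]
    noncomm_ring
  rw [hexp]
  rw [Matrix.trace_add, Matrix.trace_sub, Matrix.trace_sub]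
  have h1 : ((M * _root_.blockDiag Q)ᵀ * L).trace = (Lᵀ * (M * _root_.blockDiag Q)).trace := by
    rw [← Matrix.trace_transpose ((M * _root_.blockDiag Q)ᵀ * L), Matrix.transpose_mul,
      Matrix.transpose_transpose]
  have h2 : (Lᵀ * (M * _root_.blockDiag Q)).trace = ∑ t, (diagBlock (Lᵀ * M) t * Q t).trace := by
    rw [← Matrix.mul_assoc, trace_mul_blockDiag]
  have h3 : ((M * _root_.blockDiag Q)ᵀ * (M * _root_.blockDiag Q)).trace = frobSq M := by
    rw [← frobSq_eq_trace]; exact hX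
  rw [h1, h2, h3, ← frobSq_eq_trace]
  ring

lemma distAWsq_le_frobSq (L M : Matrix (Fin N × Fin d) (Fin N × Fin d) ℝ)
    {Q : Fin N → Matrix (Fin d) (Fin d) ℝ} (hQ : ∀ t, (Q t)ᵀ * Q t = 1) :
    distAWsq L M ≤ frobSq (L - M * _root_.blockDiag Q) := by
  rw [frobSq_sub_mul L M hQ, distAWsq]
  have h : ∑ t, (diagBlock (Lᵀ * M) t * Q t).trace
      ≤ ∑ t, nuclearNorm (diagBlock (Lᵀ * M) t) :=
    Finset.sum_le_sum fun t _ => trace_mul_orth_le_nuclear _ _ (hQ t)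
  linarith

lemma distAWsq_exists_eq (L M : Matrix (Fin N × Fin d) (Fin N × Fin d) ℝ) :
    ∃ Q : Fin N → Matrix (Fin d) (Fin d) ℝ, (∀ t, (Q t)ᵀ * Q t = 1) ∧
      distAWsq L M = frobSq (L - M * _root_.blockDiag Q) := by
  choose Q hQo hQtr using fun t => exists_trace_mul_eq_nuclear (diagBlock (Lᵀ * M) t)
  refine ⟨Q, hQo, ?_⟩
  rw [frobSq_sub_mul L M hQo, distAWsq]
  have h : ∑ t, (diagBlock (Lᵀ * M) t * Q t).trace
      = ∑ t, nuclearNorm (diagBlock (Lᵀ * M) t) :=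
    Finset.sum_congr rfl fun t _ => hQtr t
  rw [h]

end Blocks

/-- `dist_AW` is a pseudometric on block lower triangular matrices:
nonnegative, symmetric, vanishing on the diagonal, and satisfying the
triangle inequality. -/
theorem distAW_pseudometric (N d : ℕ)
    (L M P : Matrix (Fin N × Fin d) (Fin N × Fin d) ℝ)
    (hL : BlockLowerTri L) (hM : BlockLowerTri M) (hP : BlockLowerTri P) :
    0 ≤ distAW L M ∧
    distAW L M = distAW M L ∧
    distAW L L = 0 ∧
    distAW L P ≤ distAW L M + distAW M P := by
  refine ⟨Real.sqrt_nonneg _, ?_, ?_, ?_⟩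
  · rw [distAW, distAW]
    congr 1
    rw [distAWsq, distAWsq]
    have h : ∀ t, diagBlock (Mᵀ * L) t = (diagBlock (Lᵀ * M) t)ᵀ := by
      intro t; ext i j
      simp only [diagBlock, Matrix.transpose_apply, Matrix.mul_apply]
      exact Finset.sum_congr rfl fun p _ => by ring
    have h2 : ∑ t, nuclearNorm (diagBlock (Mᵀ * L) t)
        = ∑ t, nuclearNorm (diagBlock (Lᵀ * M) t) :=
      Finset.sum_congr rfl fun t _ => by rw [h t, nuclearNorm_transpose]
    rw [h2]; ring
  · rw [distAW, Real.sqrt_eq_zero']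
    rw [distAWsq]
    have hb : ∀ t : Fin N, (diagBlock (Lᵀ * L) t).trace
        ≤ nuclearNorm (diagBlock (Lᵀ * L) t) := by
      intro t
      have h := trace_mul_orth_le_nuclear (diagBlock (Lᵀ * L) t) 1 (by simp)
      simpa using h
    have hsum : ∑ t, (diagBlock (Lᵀ * L) t).trace = frobSq L := by
      rw [sum_trace_diagBlock, ← frobSq_eq_trace]
    have hle : frobSq L ≤ ∑ t, nuclearNorm (diagBlock (Lᵀ * L) t) := by
      rw [← hsum]; exact Finset.sum_le_sum fun t _ => hb t
    linarith
  · obtain ⟨Q, hQo, hQeq⟩ := distAWsq_exists_eq L M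
    obtain ⟨R, hRo, hReq⟩ := distAWsq_exists_eq M P
    have hSo : ∀ t, ((fun t => R t * Q t) t)ᵀ * ((fun t => R t * Q t) t) = 1 := by
      intro t
      show (R t * Q t)ᵀ * (R t * Q t) = 1
      rw [Matrix.transpose_mul, Matrix.mul_assoc, ← Matrix.mul_assoc (R t)ᵀ,
        hRo t, Matrix.one_mul, hQo t]
    have h1 : distAW L P ≤ frobNorm (L - P * _root_.blockDiag (fun t => R t * Q t)) := by
      rw [distAW]
      exact Real.sqrt_le_sqrt (distAWsq_le_frobSq L P hSo)
    have hsplit : L - P * _root_.blockDiag (fun t => R t * Q t)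
        = (L - M * _root_.blockDiag Q)
          + ((M - P * _root_.blockDiag R) * _root_.blockDiag Q) := by
      rw [← blockDiag_mul', Matrix.sub_mul M (P * _root_.blockDiag R),
        ← Matrix.mul_assoc P]
      exact (sub_add_sub_cancel _ _ _).symm
    have h4 : frobNorm (L - M * _root_.blockDiag Q) = distAW L M := by
      rw [distAW, hQeq]; rfl
    have h5 : frobNorm ((M - P * _root_.blockDiag R) * _root_.blockDiag Q)
        = distAW M P := by
      show Real.sqrt _ = _
      rw [frobSq_mul_orth _ (blockDiag_orth' hQo), distAW, hReq]
    have h6 := frobNorm_triangle (L - M * _root_.blockDiag Q)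
      ((M - P * _root_.blockDiag R) * _root_.blockDiag Q)
    rw [← hsplit, h4, h5] at h6
    linarith
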